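/- Let E be an AL-space and S = (S_t)_{t∈(0,∞)} a bounded semigroup of positive operators on E. Then for every fixed point x of S (i.e., S_t x = x for all t > 0) there exists a positive fixed point y of S with |x| ≤ y. -/

import Mathlib

open Filter Topology

/-- Let `E` be an AL-space and `S = (S t)_{t ∈ (0,∞)}` a bounded semigroup of positive
operators on `E`. Then for every fixed point `x` of `S` there exists a positive fixed
point `y` of `S` with `|x| ≤ y`. -/
theorem exists_positive_fixed_point_dominating_abs
    {E : Type*} [NormedAddCommGroup E] [Lattice E] [HasSolidNorm E] [IsOrderedAddMonoid E] [NormedSpace ℝ E] [CompleteSpace E]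
    (hAL : ∀ x y : E, 0 ≤ x → 0 ≤ y → ‖x + y‖ = ‖x‖ + ‖y‖)
    (S : ℝ → E →L[ℝ] E)
    (hsg : ∀ s t : ℝ, 0 < s → 0 < t → S (s + t) = (S s).comp (S t))
    (hbdd : ∃ C : ℝ, ∀ t : ℝ, 0 < t → ‖S t‖ ≤ C)
    (hpos : ∀ t : ℝ, 0 < t → ∀ x : E, 0 ≤ x → 0 ≤ S t x) :
    ∀ x : E, (∀ t : ℝ, 0 < t → S t x = x) →
      ∃ y : E, 0 ≤ y ∧ (∀ t : ℝ, 0 < t → S t y = y) ∧ |x| ≤ y := by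
  obtain ⟨C, hC⟩ := hbdd
  intro x hx
  -- the absolute value is a subfixed point
  have habs : ∀ t : ℝ, 0 < t → |x| ≤ S t |x| := by
    intro t ht
    have h1 : x ≤ S t |x| := by
      have h := hpos t ht (|x| - x) (sub_nonneg.2 (le_abs_self x))
      rw [map_sub, hx t ht] at h
      exact sub_nonneg.1 h
    have h2 : -x ≤ S t |x| := by
      have h := hpos t ht (|x| - (-x)) (sub_nonneg.2 (neg_le_abs x))
      rw [map_sub, map_neg, hx t ht] at h
      exact sub_nonneg.1 h
    exact abs_le'.2 ⟨h1, h2⟩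
  -- monotonicity in time
  have hmonoT : ∀ s t : ℝ, 0 < s → s ≤ t → S s |x| ≤ S t |x| := by
    intro s t hs hst
    rcases eq_or_lt_of_le hst with rfl | hlt
    · exact le_rfl
    · have hr : 0 < t - s := by linarith
      have h1 := hpos s hs (S (t - s) |x| - |x|) (sub_nonneg.2 (habs _ hr))
      rw [map_sub] at h1
      have h2 : S t = (S s).comp (S (t - s)) := by
        have h := hsg s (t - s) hs hr
        rwa [show s + (t - s) = t by ring] at h
      rw [h2, ContinuousLinearMap.comp_apply]
      exact sub_nonneg.1 h1
  set u : ℕ → E := fun n => S ((n : ℝ) + 1) |x| with hu_def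
  have htn : ∀ n : ℕ, (0 : ℝ) < (n : ℝ) + 1 := fun n => by positivity
  have hu0 : ∀ n, 0 ≤ u n := fun n => hpos _ (htn n) _ (abs_nonneg x)
  have huabs : ∀ n, |x| ≤ u n := fun n => habs _ (htn n)
  have humono : Monotone u := by
    intro m n h
    exact hmonoT _ _ (htn m) (by exact_mod_cast add_le_add_left (Nat.cast_le.2 h) 1)
  set f : ℕ → ℝ := fun n => ‖u n‖ with hf_def
  have hnorm_eq : ∀ m n : ℕ, m ≤ n → f n = f m + ‖u n - u m‖ := by
    intro m n h
    have h1 := hAL (u m) (u n - u m) (hu0 m) (sub_nonneg.2 (humono h))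
    rwa [show u m + (u n - u m) = u n by abel] at h1
  have hf_mono : Monotone f := by
    intro m n h
    have := hnorm_eq m n h
    have h2 : 0 ≤ ‖u n - u m‖ := norm_nonneg _
    linarith
  have hf_bdd : ∀ n, f n ≤ C * ‖x‖ := by
    intro n
    calc f n ≤ ‖S ((n : ℝ) + 1)‖ * ‖|x|‖ := (S _).le_opNorm _
      _ ≤ C * ‖x‖ := by
          rw [norm_abs_eq_norm]
          exact mul_le_mul_of_nonneg_right (hC _ (htn n)) (norm_nonneg x)
  have hf_tendsto : Tendsto f atTop (𝓝 (⨆ n, f n)) :=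
    tendsto_atTop_ciSup hf_mono ⟨C * ‖x‖, by rintro y ⟨n, rfl⟩; exact hf_bdd n⟩
  have hf_cauchy : CauchySeq f := hf_tendsto.cauchySeq
  have hdist : ∀ m n : ℕ, dist (u m) (u n) = dist (f m) (f n) := by
    have key : ∀ m n : ℕ, m ≤ n → dist (u m) (u n) = dist (f m) (f n) := by
      intro m n h
      have h1 := hnorm_eq m n h
      rw [dist_eq_norm, norm_sub_rev, Real.dist_eq, abs_of_nonpos (by linarith [hf_mono h])]
      linarith
    intro m n
    rcases le_total m n with h | h
    · exact key m n h
    · rw [dist_comm, dist_comm (f m)]; exact key n m h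
  have hu_cauchy : CauchySeq u := by
    rw [Metric.cauchySeq_iff]
    intro ε hε
    obtain ⟨N, hN⟩ := Metric.cauchySeq_iff.1 hf_cauchy ε hε
    exact ⟨N, fun m hm n hn => by rw [hdist]; exact hN m hm n hn⟩
  obtain ⟨y, hy⟩ := cauchySeq_tendsto_of_complete hu_cauchy
  have hy0 : 0 ≤ y := le_of_tendsto_of_tendsto' tendsto_const_nhds hy hu0
  have hyabs : |x| ≤ y := le_of_tendsto_of_tendsto' tendsto_const_nhds hy huabs
  refine ⟨y, hy0, ?_, hyabs⟩
  intro t ht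
  set k : ℕ := ⌈t⌉₊ with hk
  set v : ℕ → E := fun n => S (t + ((n : ℝ) + 1)) |x| with hv_def
  have hSv : ∀ n, S t (u n) = v n := by
    intro n
    have h := hsg t ((n : ℝ) + 1) ht (htn n)
    simp only [hv_def, hu_def, h, ContinuousLinearMap.comp_apply]
  have h1 : ∀ n, u n ≤ v n := fun n => hmonoT _ _ (htn n) (by linarith)
  have h2 : ∀ n, v n ≤ u (n + k) := by
    intro n
    have hle : t ≤ (k : ℝ) := Nat.le_ceil t
    refine hmonoT _ _ (by positivity) ?_
    push_cast
    linarith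
  have hshift : Tendsto (fun n => u (n + k)) atTop (𝓝 y) := hy.comp (tendsto_add_atTop_nat k)
  have hdiff0 : Tendsto (fun n => u (n + k) - u n) atTop (𝓝 0) := by
    have := hshift.sub hy
    rwa [sub_self] at this
  have hvu : Tendsto (fun n => v n - u n) atTop (𝓝 0) := by
    have hg : Tendsto (fun n => ‖u (n + k) - u n‖) atTop (𝓝 0) := by
      simpa using hdiff0.norm
    refine squeeze_zero_norm (fun n => ?_) hg
    refine HasSolidNorm.solid ?_
    rw [abs_of_nonneg (sub_nonneg.2 (h1 n)), abs_of_nonneg (sub_nonneg.2 ((h1 n).trans (h2 n)))]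
    exact sub_le_sub_right (h2 n) _
  have hv_tendsto : Tendsto v atTop (𝓝 y) := by
    have := hvu.add hy
    simpa using this
  have hSu_tendsto : Tendsto (fun n => S t (u n)) atTop (𝓝 (S t y)) :=
    ((S t).continuous.tendsto y).comp hy
  rw [funext hSv] at hSu_tendsto
  exact tendsto_nhds_unique hSu_tendsto hv_tendsto
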